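/- If G is a graph with genus g(G) ≤ 2, then gon(G) ≤ 2. -/

import Mathlib

/-- A finite loopless multigraph: a finite vertex type, a finite edge type,
and an assignment of an unordered pair of distinct endpoints to each edge. -/
structure Multigraph where
  V : Type
  E : Type
  [fintypeV : Fintype V]
  [fintypeE : Fintype E]
  [decEqV : DecidableEq V]
  ends : E → Sym2 V
  loopless : ∀ e, ¬ (ends e).IsDiag

attribute [instance] Multigraph.fintypeV Multigraph.fintypeE Multigraph.decEqV

namespace Multigraph

/-- The graph obtained by deleting the edges in `W` is connected (finite graphs are
connected iff the vertex set is nonempty and every nonempty proper vertex subset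
has an edge leaving it). -/
def ConnectedWithout (G : Multigraph) (W : Set G.E) : Prop :=
  Nonempty G.V ∧
    ∀ A : Finset G.V, A.Nonempty → A ≠ Finset.univ →
      ∃ e, e ∉ W ∧ ∃ u v, G.ends e = s(u, v) ∧ u ∈ A ∧ v ∉ A

/-- `G` is connected. -/
def Connected (G : Multigraph) : Prop := G.ConnectedWithout ∅

/-- `G` is `k`-edge-connected: deleting any set of at most `k - 1` edges
leaves a connected graph. -/
def EdgeConnected (G : Multigraph) (k : ℕ) : Prop :=
  ∀ W : Finset G.E, W.card < k → G.ConnectedWithout ↑W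

/-- An edge is a bridge if deleting it disconnects the graph. -/
def IsBridge (G : Multigraph) (e : G.E) : Prop := ¬ G.ConnectedWithout {e}

/-- The graph obtained by deleting the vertices in `U` (and all incident edges)
is connected. -/
def ConnectedAvoiding (G : Multigraph) (U : Set G.V) : Prop :=
  (∃ v, v ∉ U) ∧
    ∀ A : Finset G.V, A.Nonempty → (∀ a ∈ A, a ∉ U) → (∃ w, w ∉ U ∧ w ∉ A) →
      ∃ e u v, G.ends e = s(u, v) ∧ u ∈ A ∧ v ∉ A ∧ v ∉ U

/-- `G` is `k`-vertex-connected: deleting any set of at most `k - 1` vertices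
leaves a connected graph. -/
def VertexConnected (G : Multigraph) (k : ℕ) : Prop :=
  ∀ U : Finset G.V, U.card < k → G.ConnectedAvoiding ↑U

/-- `G` is simple: no two distinct edges have the same pair of endpoints. -/
def Simple (G : Multigraph) : Prop :=
  ∀ e e' : G.E, G.ends e = G.ends e' → e = e'

/-- The genus `g(G) = |E| - |V| + 1`. -/
def genus (G : Multigraph) : ℤ :=
  (Fintype.card G.E : ℤ) - (Fintype.card G.V : ℤ) + 1

/-- A tree is a connected graph of genus 0. -/
def IsTree (G : Multigraph) : Prop := G.Connected ∧ G.genus = 0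

/-- The number of edges joining `u` and `v`. -/
noncomputable def numEdges (G : Multigraph) (u v : G.V) : ℕ :=
  Set.ncard {e : G.E | G.ends e = s(u, v)}

/-- The valence of a vertex: the number of incident edges. -/
noncomputable def valence (G : Multigraph) (v : G.V) : ℕ :=
  Set.ncard {e : G.E | v ∈ G.ends e}

/-- A divisor on `G`: an element of the free abelian group on `V(G)`. -/
abbrev Divisor (G : Multigraph) : Type := G.V → ℤ

/-- The degree of a divisor: the sum of its coefficients. -/
def degree (G : Multigraph) (D : G.Divisor) : ℤ := ∑ v, D v

/-- A divisor is effective if all its coefficients are nonnegative. -/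
def Effective (G : Multigraph) (D : G.Divisor) : Prop := ∀ v, 0 ≤ D v

/-- The Laplacian of `G` applied to an integer vector `f`. -/
noncomputable def laplacian (G : Multigraph) (f : G.V → ℤ) : G.Divisor :=
  fun v => ∑ w, (G.numEdges v w : ℤ) * (f v - f w)

/-- Linear equivalence of divisors: the difference is in the image of the Laplacian. -/
def LinEquiv (G : Multigraph) (D D' : G.Divisor) : Prop :=
  ∃ f : G.V → ℤ, D - D' = G.laplacian f

/-- `D - F` is equivalent to an effective divisor for every effective `F` of degree `k`. -/
def RankGe (G : Multigraph) (D : G.Divisor) (k : ℤ) : Prop :=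
  ∀ F : G.Divisor, G.Effective F → G.degree F = k →
    ∃ E' : G.Divisor, G.Effective E' ∧ G.LinEquiv (D - F) E'

/-- The Baker–Norine rank of a divisor. -/
noncomputable def rank (G : Multigraph) (D : G.Divisor) : ℤ :=
  sSup {r : ℤ | r = -1 ∨ (0 ≤ r ∧ G.RankGe D r)}

/-- The (divisorial) gonality of `G`: the minimum degree of an effective divisor
of rank at least 1. -/
noncomputable def gonality (G : Multigraph) : ℕ :=
  sInf {n : ℕ | ∃ D : G.Divisor, G.Effective D ∧ G.degree D = (n : ℤ) ∧ 1 ≤ G.rank D}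

end Multigraph

/-- A morphism of multigraphs: vertices map to vertices, and each edge maps either
to an edge joining the images of its endpoints (if they are distinct) or to the
common image of its endpoints. -/
structure Morphism (G G' : Multigraph) where
  vertexMap : G.V → G'.V
  edgeMap : G.E → G'.E ⊕ G'.V
  map_edge_of_eq : ∀ e u v, G.ends e = s(u, v) → vertexMap u = vertexMap v →
    edgeMap e = Sum.inr (vertexMap u)
  map_edge_of_ne : ∀ e u v, G.ends e = s(u, v) → vertexMap u ≠ vertexMap v →
    ∃ e', edgeMap e = Sum.inl e' ∧ G'.ends e' = s(vertexMap u, vertexMap v)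

namespace Morphism

variable {G G' : Multigraph}

/-- The multiplicity `m_φ(v)` of `φ` at `v` with respect to an edge `e'` of `G'`. -/
noncomputable def mult (φ : Morphism G G') (v : G.V) (e' : G'.E) : ℕ :=
  Set.ncard {e : G.E | v ∈ G.ends e ∧ φ.edgeMap e = Sum.inl e'}

/-- `φ` is harmonic if `m_φ(v)` does not depend on the chosen edge `e'`
incident to `φ(v)`. -/
def Harmonic (φ : Morphism G G') : Prop :=
  ∀ (v : G.V) (e₁ e₂ : G'.E),
    φ.vertexMap v ∈ G'.ends e₁ → φ.vertexMap v ∈ G'.ends e₂ →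
      φ.mult v e₁ = φ.mult v e₂

/-- `φ` is non-degenerate if `m_φ(v) > 0` for every vertex `v`. -/
def Nondegenerate (φ : Morphism G G') : Prop :=
  ∀ (v : G.V) (e' : G'.E), φ.vertexMap v ∈ G'.ends e' → 0 < φ.mult v e'

/-- `φ` has degree `d`: every edge of `G'` has exactly `d` preimages. -/
def HasDegree (φ : Morphism G G') (d : ℕ) : Prop :=
  Nonempty G'.E ∧ ∀ e' : G'.E, Set.ncard {e : G.E | φ.edgeMap e = Sum.inl e'} = d

end Morphism

namespace Multigraph

open Finset
open scoped Classical

variable (G : Multigraph)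

/-- Finset-valued edge count between two vertices. -/
noncomputable def mEd (u v : G.V) : ℕ :=
  (Finset.univ.filter (fun e => G.ends e = s(u, v))).card

lemma mEd_symm (u v : G.V) : G.mEd u v = G.mEd v u := by
  unfold mEd
  congr 1
  ext e
  simp [Sym2.eq_swap]

lemma mEd_self (v : G.V) : G.mEd v v = 0 := by
  unfold mEd
  rw [Finset.card_eq_zero, Finset.eq_empty_iff_forall_notMem]
  intro e he
  simp only [Finset.mem_filter, Finset.mem_univ, true_and] at he
  exact G.loopless e (he ▸ Sym2.mk_isDiag_iff.mpr rfl)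

lemma numEdges_eq (u v : G.V) : G.numEdges u v = G.mEd u v := by
  unfold numEdges mEd
  rw [Set.ncard_eq_toFinset_card']
  congr 1
  ext e
  simp

/-- Number of edges from `w` into the set `S`. -/
noncomputable def eCt (w : G.V) (S : Finset G.V) : ℕ := ∑ x ∈ S, G.mEd w x

lemma laplacian_apply (f : G.V → ℤ) (v : G.V) :
    G.laplacian f v = ∑ w, (G.mEd v w : ℤ) * (f v - f w) := by
  unfold laplacian
  simp [numEdges_eq]

lemma lap_add (f g : G.V → ℤ) (v : G.V) :
    G.laplacian (fun w => f w + g w) v = G.laplacian f v + G.laplacian g v := by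
  simp only [laplacian_apply]
  rw [← Finset.sum_add_distrib]
  apply Finset.sum_congr rfl
  intros; ring

lemma lap_zero (v : G.V) : G.laplacian (fun _ => (0:ℤ)) v = 0 := by
  simp [laplacian_apply]

lemma lap_sub_const (f : G.V → ℤ) (a : ℤ) (v : G.V) :
    G.laplacian (fun w => f w - a) v = G.laplacian f v := by
  simp only [laplacian_apply]
  apply Finset.sum_congr rfl
  intros; ring

lemma lap_sum {ι : Type*} (s : Finset ι) (F : ι → G.V → ℤ) (w : G.V) :
    G.laplacian (fun v => ∑ k ∈ s, F k v) w = ∑ k ∈ s, G.laplacian (F k) w := by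
  classical
  induction s using Finset.induction with
  | empty => simp [lap_zero]
  | insert _ _ hx ih =>
      rename_i a s
      rw [Finset.sum_insert hx]
      have : G.laplacian (fun v => F a v + ∑ k ∈ s, F k v) w
          = G.laplacian (F a) w + G.laplacian (fun v => ∑ k ∈ s, F k v) w := G.lap_add _ _ _
      simp only [Finset.sum_insert hx]
      rw [this, ih]

lemma lap_smul (a : ℤ) (f : G.V → ℤ) (v : G.V) :
    G.laplacian (fun w => a * f w) v = a * G.laplacian f v := by
  simp only [laplacian_apply, Finset.mul_sum]
  apply Finset.sum_congr rfl
  intros; ring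

/-- Integer indicator function of a finset. -/
noncomputable def ind (S : Finset G.V) : G.V → ℤ := fun v => if v ∈ S then 1 else 0

lemma lap_ind (S : Finset G.V) (w : G.V) :
    G.laplacian (G.ind S) w =
      if w ∈ S then (G.eCt w Sᶜ : ℤ) else -(G.eCt w S : ℤ) := by
  simp only [laplacian_apply, ind, eCt]
  by_cases hw : w ∈ S
  · simp only [hw, if_true]
    have hrw : (Sᶜ : Finset G.V) = Finset.univ.filter (fun x => x ∉ S) := by
      ext x; simp
    rw [hrw, Finset.sum_filter]
    push_cast
    apply Finset.sum_congr rfl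
    intro x _
    by_cases hx : x ∈ S <;> simp [hx]
  · simp only [hw, if_false]
    push_cast
    rw [← Finset.sum_neg_distrib]
    have hrw : (S : Finset G.V) = Finset.univ.filter (fun x => x ∈ S) := by
      ext x; simp
    conv_rhs => rw [hrw]
    rw [Finset.sum_filter]
    apply Finset.sum_congr rfl
    intro x _
    by_cases hx : x ∈ S <;> simp [hx]

end Multigraph
namespace Multigraph

open Finset
open scoped Classical

variable (G : Multigraph)

lemma sum_sum_antisymm (A : Finset G.V) (f : G.V → ℤ) :
    ∑ w ∈ A, ∑ x ∈ A, (G.mEd w x : ℤ) * (f w - f x) = 0 := by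
  have h : ∑ w ∈ A, ∑ x ∈ A, (G.mEd w x : ℤ) * (f w - f x)
      = -∑ w ∈ A, ∑ x ∈ A, (G.mEd w x : ℤ) * (f w - f x) := by
    conv_lhs => rw [Finset.sum_comm]
    rw [← Finset.sum_neg_distrib]
    apply Finset.sum_congr rfl
    intro x _
    rw [← Finset.sum_neg_distrib]
    apply Finset.sum_congr rfl
    intro w _
    rw [G.mEd_symm x w]
    ring
  linarith

lemma sum_lap (f : G.V → ℤ) (A : Finset G.V) :
    ∑ w ∈ A, G.laplacian f w = ∑ w ∈ A, ∑ x ∈ Aᶜ, (G.mEd w x : ℤ) * (f w - f x) := by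
  have key : ∀ w, G.laplacian f w
      = (∑ x ∈ A, (G.mEd w x : ℤ) * (f w - f x)) + ∑ x ∈ Aᶜ, (G.mEd w x : ℤ) * (f w - f x) := by
    intro w
    rw [laplacian_apply, Finset.sum_add_sum_compl]
  rw [Finset.sum_congr rfl (fun w _ => key w), Finset.sum_add_distrib,
    G.sum_sum_antisymm A f, zero_add]

lemma sum_lap_univ (f : G.V → ℤ) : ∑ w, G.laplacian f w = 0 := by
  rw [G.sum_lap f Finset.univ]
  simp

lemma linEquiv_degree {D D' : G.Divisor} (h : G.LinEquiv D D') :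
    G.degree D = G.degree D' := by
  obtain ⟨f, hf⟩ := h
  have h2 : ∀ v, D v - D' v = G.laplacian f v := fun v => congrFun hf v
  have h3 : ∑ v, (D v - D' v) = 0 := by
    rw [Finset.sum_congr rfl (fun v _ => h2 v)]
    exact G.sum_lap_univ f
  rw [Finset.sum_sub_distrib] at h3
  unfold degree
  linarith

lemma cross_edge (hG : G.Connected) {A : Finset G.V} (h1 : A.Nonempty) (h2 : A ≠ Finset.univ) :
    ∃ u ∈ A, ∃ v ∈ Aᶜ, 1 ≤ G.mEd u v := by
  obtain ⟨e, -, u, v, hend, hu, hv⟩ := hG.2 A h1 h2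
  refine ⟨u, hu, v, Finset.mem_compl.mpr hv, ?_⟩
  rw [Nat.one_le_iff_ne_zero, ← Nat.pos_iff_ne_zero, mEd, Finset.card_pos]
  exact ⟨e, by simp [hend]⟩

lemma eCt_le_card (w : G.V) (S : Finset G.V) : G.eCt w S ≤ Fintype.card G.E := by
  unfold eCt mEd
  rw [← Finset.card_biUnion]
  · exact Finset.card_le_card (Finset.subset_univ _) |>.trans (le_of_eq (Finset.card_univ))
  · intro x _ y _ hxy
    apply Finset.disjoint_left.mpr
    intro e he1 he2
    simp only [Finset.mem_filter, Finset.mem_univ, true_and] at he1 he2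
    exact hxy (Sym2.congr_right.mp (he1 ▸ he2 : s(w,x) = s(w,y)).symm).symm

lemma eCt_union {w : G.V} {S T : Finset G.V} (h : Disjoint S T) :
    G.eCt w (S ∪ T) = G.eCt w S + G.eCt w T :=
  Finset.sum_union h

lemma eCt_mono (w : G.V) {S T : Finset G.V} (h : S ⊆ T) : G.eCt w S ≤ G.eCt w T :=
  Finset.sum_le_sum_of_subset h

lemma mEd_le_eCt {w x : G.V} {S : Finset G.V} (hx : x ∈ S) : G.mEd w x ≤ G.eCt w S :=
  Finset.single_le_sum (fun _ _ => Nat.zero_le _) hx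

lemma ends_exists (e : G.E) : ∃ a b, a ≠ b ∧ G.ends e = s(a, b) := by
  obtain ⟨⟨a, b⟩, hab⟩ := Quot.exists_rep (G.ends e)
  refine ⟨a, b, ?_, hab.symm⟩
  intro h
  exact G.loopless e (by rw [← hab, h]; exact Sym2.mk_isDiag_iff.mpr rfl)

lemma valence_eq (w : G.V) : G.valence w = G.eCt w (Finset.univ.erase w) := by
  unfold valence
  rw [Set.ncard_eq_toFinset_card']
  have h1 : {e : G.E | w ∈ G.ends e}.toFinset = Finset.univ.filter (fun e => w ∈ G.ends e) := by
    ext e; simp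
  rw [h1]
  unfold eCt mEd
  rw [← Finset.card_biUnion]
  · congr 1
    ext e
    simp only [Finset.mem_filter, Finset.mem_univ, true_and, Finset.mem_biUnion,
      Finset.mem_erase]
    constructor
    · intro hw
      obtain ⟨a, b, hab, he⟩ := G.ends_exists e
      rw [he, Sym2.mem_iff] at hw
      rcases hw with rfl | rfl
      · exact ⟨b, ⟨hab.symm, trivial⟩, he⟩
      · exact ⟨a, ⟨hab, trivial⟩, by rw [he, Sym2.eq_swap]⟩
    · rintro ⟨x, -, he⟩
      rw [he]
      exact Sym2.mem_mk_left w x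
  · intro x _ y _ hxy
    apply Finset.disjoint_left.mpr
    intro e he1 he2
    simp only [Finset.mem_filter, Finset.mem_univ, true_and] at he1 he2
    exact hxy (Sym2.congr_right.mp (he1 ▸ he2 : s(w,x) = s(w,y)).symm).symm

end Multigraph
namespace Multigraph

open Finset
open scoped Classical

variable (G : Multigraph)

/-- Number of edges with at least one endpoint in `A`. -/
noncomputable def touch (A : Finset G.V) : ℕ :=
  (Finset.univ.filter (fun e => ∃ x ∈ A, x ∈ G.ends e)).card

lemma touch_empty : G.touch ∅ = 0 := by
  unfold touch
  rw [Finset.card_eq_zero, Finset.eq_empty_iff_forall_notMem]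
  intro e he
  simp at he

lemma touch_erase_univ (q : G.V) : G.touch (Finset.univ.erase q) = Fintype.card G.E := by
  unfold touch
  rw [← Finset.card_univ]
  congr 1
  rw [Finset.eq_univ_iff_forall]
  intro e
  simp only [Finset.mem_filter, Finset.mem_univ, true_and]
  obtain ⟨a, b, hab, he⟩ := G.ends_exists e
  by_cases ha : a = q
  · exact ⟨b, Finset.mem_erase.mpr ⟨by rw [← ha]; exact hab.symm, Finset.mem_univ b⟩,
      by rw [he]; exact Sym2.mem_mk_right a b⟩
  · exact ⟨a, Finset.mem_erase.mpr ⟨ha, Finset.mem_univ a⟩,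
      by rw [he]; exact Sym2.mem_mk_left a b⟩

lemma touch_erase {A : Finset G.V} {w : G.V} (hw : w ∈ A) :
    G.touch A = G.touch (A.erase w) + G.eCt w Aᶜ := by
  unfold touch
  have hsplit : Finset.univ.filter (fun e => ∃ x ∈ A, x ∈ G.ends e)
      = (Finset.univ.filter (fun e => ∃ x ∈ A.erase w, x ∈ G.ends e))
        ∪ (Aᶜ.biUnion (fun x => Finset.univ.filter (fun e => G.ends e = s(w, x)))) := by
    ext e
    simp only [Finset.mem_filter, Finset.mem_univ, true_and, Finset.mem_union,
      Finset.mem_biUnion, Finset.mem_compl]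
    constructor
    · rintro ⟨x, hxA, hxe⟩
      by_cases hcase : ∃ y ∈ A.erase w, y ∈ G.ends e
      · exact Or.inl hcase
      · push_neg at hcase
        obtain ⟨a, b, hab, he⟩ := G.ends_exists e
        -- x ∈ A, x ∈ ends e, and x ∉ erase: x = w
        have hxw : x = w := by
          by_contra hxw
          exact hcase x (Finset.mem_erase.mpr ⟨hxw, hxA⟩) hxe
        subst hxw
        -- other endpoint
        rw [he, Sym2.mem_iff] at hxe
        rcases hxe with rfl | rfl
        · refine Or.inr ⟨b, ?_, he⟩
          intro hbA
          exact hcase b (Finset.mem_erase.mpr ⟨hab.symm, hbA⟩) (by rw [he]; exact Sym2.mem_mk_right x b)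
        · refine Or.inr ⟨a, ?_, by rw [he, Sym2.eq_swap]⟩
          intro haA
          exact hcase a (Finset.mem_erase.mpr ⟨hab, haA⟩) (by rw [he]; exact Sym2.mem_mk_left a x)
    · rintro (⟨x, hx, hxe⟩ | ⟨x, hx, he⟩)
      · exact ⟨x, Finset.mem_of_mem_erase hx, hxe⟩
      · exact ⟨w, hw, by rw [he]; exact Sym2.mem_mk_left w x⟩
  rw [hsplit, Finset.card_union_of_disjoint, Finset.card_biUnion]
  · rfl
  · intro x _ y _ hxy
    apply Finset.disjoint_left.mpr
    intro e he1 he2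
    simp only [Finset.mem_filter, Finset.mem_univ, true_and] at he1 he2
    exact hxy (Sym2.congr_right.mp (he1 ▸ he2 : s(w,x) = s(w,y)).symm).symm
  · apply Finset.disjoint_left.mpr
    intro e he1 he2
    simp only [Finset.mem_filter, Finset.mem_univ, true_and, Finset.mem_biUnion,
      Finset.mem_compl] at he1 he2
    obtain ⟨x, hxA, hxe⟩ := he1
    obtain ⟨y, hyA, hye⟩ := he2
    rw [hye, Sym2.mem_iff] at hxe
    rcases hxe with rfl | rfl
    · exact (Finset.mem_erase.mp hxA).1 rfl
    · exact hyA (Finset.mem_of_mem_erase hxA)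

lemma pair_count (z : Sym2 G.V) (hz : ¬ z.IsDiag) :
    ((Finset.univ : Finset (G.V × G.V)).filter (fun p => z = s(p.1, p.2))).card = 2 := by
  obtain ⟨⟨a, b⟩, hab⟩ := Quot.exists_rep z
  have hne : a ≠ b := by
    intro h
    exact hz (by rw [← hab, h]; exact Sym2.mk_isDiag_iff.mpr rfl)
  have : (Finset.univ : Finset (G.V × G.V)).filter (fun p => z = s(p.1, p.2))
      = {(a, b), (b, a)} := by
    ext ⟨x, y⟩
    simp only [Finset.mem_filter, Finset.mem_univ, true_and, Finset.mem_insert,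
      Finset.mem_singleton, Prod.mk.injEq]
    rw [← hab]
    show s(a, b) = s(x, y) ↔ _
    rw [Sym2.eq_iff]
    constructor
    · rintro (⟨rfl, rfl⟩ | ⟨rfl, rfl⟩)
      · exact Or.inl ⟨rfl, rfl⟩
      · exact Or.inr ⟨rfl, rfl⟩
    · rintro (⟨rfl, rfl⟩ | ⟨rfl, rfl⟩)
      · exact Or.inl ⟨rfl, rfl⟩
      · exact Or.inr ⟨rfl, rfl⟩
  rw [this, Finset.card_insert_of_notMem, Finset.card_singleton]
  simp only [Finset.mem_singleton, Prod.mk.injEq]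
  rintro ⟨h1, -⟩
  exact hne h1

lemma handshake : ∑ w, G.valence w = 2 * Fintype.card G.E := by
  have h1 : ∀ w, G.valence w = ∑ x, G.mEd w x := by
    intro w
    rw [G.valence_eq w]
    unfold eCt
    rw [Finset.sum_erase _ (G.mEd_self w)]
  rw [Finset.sum_congr rfl (fun w _ => h1 w)]
  have h2 : ∑ w, ∑ x, G.mEd w x
      = ∑ p : G.V × G.V, ((Finset.univ : Finset G.E).filter (fun e => G.ends e = s(p.1, p.2))).card := by
    rw [← Finset.sum_product']
    rfl
  rw [h2]
  have h3 : ∀ p : G.V × G.V,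
      ((Finset.univ : Finset G.E).filter (fun e => G.ends e = s(p.1, p.2))).card
      = ∑ e : G.E, (if G.ends e = s(p.1, p.2) then 1 else 0) := by
    intro p
    rw [Finset.card_filter]
  rw [Finset.sum_congr rfl (fun p _ => h3 p), Finset.sum_comm]
  have h4 : ∀ e : G.E, (∑ p : G.V × G.V, if G.ends e = s(p.1, p.2) then 1 else 0) = 2 := by
    intro e
    rw [← Finset.card_filter]
    exact G.pair_count (G.ends e) (G.loopless e)
  rw [Finset.sum_congr rfl (fun e _ => h4 e), Finset.sum_const, Finset.card_univ, smul_eq_mul,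
    Nat.mul_comm]

end Multigraph
namespace Multigraph

open Finset
open scoped Classical

variable (G : Multigraph)

lemma exists_superstable (hG : G.Connected) (c : G.V → ℤ) (q : G.V)
    (f0 : G.V → ℤ) (hf0 : ∀ w, w ≠ q → G.laplacian f0 w ≤ c w) :
    ∃ f : G.V → ℤ, (∀ w, w ≠ q → G.laplacian f w ≤ c w) ∧
      ∀ A : Finset G.V, A.Nonempty → q ∉ A →
        ∃ w ∈ A, c w - G.laplacian f w + 1 ≤ (G.eCt w Aᶜ : ℤ) := by
  classical
  have hN1 : 1 ≤ Fintype.card G.V := Fintype.card_pos_iff.mpr hG.1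
  set N : ℕ := Fintype.card G.V with hN
  set C : ℤ := ∑ w, max (c w) 0 with hC
  have hC0 : 0 ≤ C := Finset.sum_nonneg (fun w _ => le_max_right _ _)
  set T : Set (G.V → ℤ) := {g | g q = 0 ∧ ∀ w, w ≠ q → G.laplacian g w ≤ c w} with hT
  have hbound : ∀ g ∈ T, ∀ w, g w ≤ (N : ℤ) * C := by
    intro g hg w
    have main : ∀ m : ℕ,
        (Finset.univ.filter (fun v => (m : ℤ) * C < g v)) = ∅ ∨
        (Finset.univ.filter (fun v => (m : ℤ) * C < g v)).card + m + 1 ≤ N := by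
      intro m
      induction m with
      | zero =>
        right
        have hsub : (Finset.univ.filter (fun v => ((0:ℕ) : ℤ) * C < g v)) ⊆ Finset.univ.erase q := by
          intro v hv
          simp only [Finset.mem_filter] at hv
          refine Finset.mem_erase.mpr ⟨?_, Finset.mem_univ v⟩
          rintro rfl
          rw [hg.1] at hv
          simp at hv
        have hle := Finset.card_le_card hsub
        rw [Finset.card_erase_of_mem (Finset.mem_univ q), Finset.card_univ] at hle
        omega
      | succ m ih =>
        set Am := Finset.univ.filter (fun v => (m : ℤ) * C < g v) with hAm
        set Am1 := Finset.univ.filter (fun v => ((m+1 : ℕ) : ℤ) * C < g v) with hAm1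
        have hsub : Am1 ⊆ Am := by
          intro v hv
          simp only [hAm1, Finset.mem_filter] at hv
          simp only [hAm, Finset.mem_filter]
          refine ⟨Finset.mem_univ v, lt_of_le_of_lt ?_ hv.2⟩
          have : (m : ℤ) ≤ ((m+1 : ℕ) : ℤ) := by push_cast; linarith
          nlinarith
        by_cases hempty : Am = ∅
        · left
          exact Finset.subset_empty.mp (hempty ▸ hsub)
        · rcases ih with h | h
          · exact absurd h hempty
          · by_cases hemp1 : Am1 = ∅
            · left; exact hemp1
            · right
              have hAmne : Am.Nonempty := Finset.nonempty_iff_ne_empty.mpr hempty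
              have hqAm : q ∉ Am := by
                simp only [hAm, Finset.mem_filter]
                rintro ⟨-, hlt⟩
                rw [hg.1] at hlt
                nlinarith [hC0, (Nat.cast_nonneg m : (0:ℤ) ≤ m)]
              have hne : Am1 ≠ Am := by
                intro heq
                have hAmuniv : Am ≠ Finset.univ := by
                  intro hu
                  exact hqAm (hu ▸ Finset.mem_univ q)
                obtain ⟨u, hu, v, hv, huv⟩ := G.cross_edge hG hAmne hAmuniv
                -- upper bound on sum of laplacians over Am
                have hup : ∑ w ∈ Am, G.laplacian g w ≤ C := by
                  have h1 : ∑ w ∈ Am, G.laplacian g w ≤ ∑ w ∈ Am, c w := by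
                    apply Finset.sum_le_sum
                    intro w hw
                    apply hg.2 w
                    rintro rfl
                    exact hqAm hw
                  have h2 : ∑ w ∈ Am, c w ≤ ∑ w ∈ Am, max (c w) 0 :=
                    Finset.sum_le_sum (fun w _ => le_max_left _ _)
                  have h3 : ∑ w ∈ Am, max (c w) 0 ≤ C := by
                    rw [hC]
                    apply Finset.sum_le_sum_of_subset_of_nonneg (Finset.subset_univ Am)
                    intro w _ _
                    exact le_max_right _ _
                  linarith
                have hlow : C + 1 ≤ ∑ w ∈ Am, G.laplacian g w := by
                  rw [G.sum_lap g Am]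
                  have hterm : ∀ w ∈ Am, ∀ x ∈ Amᶜ,
                      (G.mEd w x : ℤ) * (C + 1) ≤ (G.mEd w x : ℤ) * (g w - g x) := by
                    intro w hw x hx
                    apply mul_le_mul_of_nonneg_left _ (Nat.cast_nonneg _)
                    have hw1 : ((m+1 : ℕ) : ℤ) * C < g w := by
                      have : w ∈ Am1 := heq ▸ hw
                      simpa [hAm1] using this
                    have hx1 : g x ≤ (m : ℤ) * C := by
                      simp only [Finset.mem_compl, hAm, Finset.mem_filter] at hx
                      push_neg at hx
                      exact hx (Finset.mem_univ x)
                    push_cast at hw1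
                    nlinarith
                  have hstep : ∑ w ∈ Am, ∑ x ∈ Amᶜ, (G.mEd w x : ℤ) * (C + 1)
                      ≤ ∑ w ∈ Am, ∑ x ∈ Amᶜ, (G.mEd w x : ℤ) * (g w - g x) :=
                    Finset.sum_le_sum (fun w hw => Finset.sum_le_sum (fun x hx => hterm w hw x hx))
                  have hone : (C + 1) * 1 ≤ ∑ w ∈ Am, ∑ x ∈ Amᶜ, (G.mEd w x : ℤ) * (C + 1) := by
                    have hin : (G.mEd u v : ℤ) * (C+1) ≤ ∑ x ∈ Amᶜ, (G.mEd u x : ℤ) * (C + 1) := by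
                      apply Finset.single_le_sum (f := fun x => (G.mEd u x : ℤ) * (C+1)) _ hv
                      intro x _
                      positivity
                    have hin2 : ∑ x ∈ Amᶜ, (G.mEd u x : ℤ) * (C + 1)
                        ≤ ∑ w ∈ Am, ∑ x ∈ Amᶜ, (G.mEd w x : ℤ) * (C + 1) := by
                      apply Finset.single_le_sum (f := fun w => ∑ x ∈ Amᶜ, (G.mEd w x : ℤ) * (C+1)) _ hu
                      intro w _
                      apply Finset.sum_nonneg
                      intro x _
                      positivity
                    have : (1 : ℤ) ≤ (G.mEd u v : ℤ) := by exact_mod_cast huv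
                    nlinarith
                  linarith
                linarith
              have hlt : Am1.card < Am.card :=
                Finset.card_lt_card (Finset.ssubset_iff_subset_ne.mpr ⟨hsub, hne⟩)
              omega
    rcases main N with h | h
    · by_contra hcon
      push_neg at hcon
      have hw : w ∈ Finset.univ.filter (fun v => (N : ℤ) * C < g v) :=
        Finset.mem_filter.mpr ⟨Finset.mem_univ w, hcon⟩
      rw [h] at hw
      exact absurd hw (Finset.notMem_empty w)
    · exact absurd h (by omega)
  -- normalized starting function
  set f1 : G.V → ℤ := fun v => f0 v - f0 q with hf1
  have hf1T : f1 ∈ T := by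
    constructor
    · simp [hf1]
    · intro w hw
      rw [hf1]
      rw [G.lap_sub_const f0 (f0 q) w]
      exact hf0 w hw
  set bd : ℤ := (N : ℤ) * C with hbd
  set T2 : Set (G.V → ℤ) := {g | g ∈ T ∧ ∀ w, f1 w ≤ g w} with hT2
  have hT2fin : T2.Finite := by
    apply Set.Finite.subset (Set.Finite.pi (fun w : G.V => Set.finite_Icc (f1 w) bd))
    intro g hg
    rw [Set.mem_pi]
    intro w _
    exact Set.mem_Icc.mpr ⟨hg.2 w, hbound g hg.1 w⟩
  have hT2ne : T2.Nonempty := ⟨f1, hf1T, fun w => le_refl _⟩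
  obtain ⟨gs, hgsT2, hmax⟩ :=
    Set.Finite.exists_maximalFor (fun g : G.V → ℤ => ∑ w, g w) T2 hT2fin hT2ne
  refine ⟨gs, hgsT2.1.2, ?_⟩
  intro A hA hqA
  by_contra hcon
  push_neg at hcon
  have hstep : ∀ w ∈ A, (G.eCt w Aᶜ : ℤ) ≤ c w - G.laplacian gs w := by
    intro w hw
    have := hcon w hw
    linarith
  set g' : G.V → ℤ := fun v => gs v + G.ind A v with hg'
  have hg'T : g' ∈ T2 := by
    refine ⟨⟨?_, ?_⟩, ?_⟩
    · simp only [hg', ind, hqA, if_false]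
      rw [hgsT2.1.1]
      simp [if_neg hqA]
    · intro w hw
      have hlap : G.laplacian g' w = G.laplacian gs w + G.laplacian (G.ind A) w :=
        G.lap_add gs (G.ind A) w
      rw [hlap, G.lap_ind A w]
      by_cases hwA : w ∈ A
      · rw [if_pos hwA]
        have := hstep w hwA
        linarith
      · rw [if_neg hwA]
        have h1 := hgsT2.1.2 w hw
        have h2 : (0:ℤ) ≤ (G.eCt w A : ℤ) := Nat.cast_nonneg _
        linarith
    · intro w
      have : (0:ℤ) ≤ G.ind A w := by unfold ind; split <;> simp
      have := hgsT2.2 w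
      simp only [hg']
      linarith
  have hsum : ∑ w, g' w = (∑ w, gs w) + (A.card : ℤ) := by
    simp only [hg']
    rw [Finset.sum_add_distrib]
    congr 1
    unfold ind
    rw [Finset.sum_ite_mem]
    simp [Finset.univ_inter]
  have hle : (∑ w, gs w) ≤ ∑ w, g' w := by
    rw [hsum]
    have : (0:ℤ) ≤ (A.card : ℤ) := Nat.cast_nonneg _
    linarith
  have heq : ∑ w, gs w = ∑ w, g' w := le_antisymm hle (hmax hg'T hle)
  rw [hsum] at heq
  have hcard : (A.card : ℤ) = 0 := by linarith
  have : A.card = 0 := by exact_mod_cast hcard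
  exact absurd (Finset.card_eq_zero.mp this) (Finset.nonempty_iff_ne_empty.mp hA)

end Multigraph
namespace Multigraph

open Finset
open scoped Classical

variable (G : Multigraph)

lemma exists_pos (q : G.V) (c' : G.V → ℤ)
    (HSS : ∀ B : Finset G.V, B.Nonempty → q ∉ B → ∃ w ∈ B, c' w + 1 ≤ (G.eCt w Bᶜ : ℤ)) :
    ∀ (A : Finset G.V), q ∉ A →
      ∃ pos : G.V → ℕ,
        (∀ x, pos x = 0 ↔ x ∉ A) ∧
        (Set.InjOn pos A) ∧
        (∀ w ∈ A, c' w + 1 ≤ (G.eCt w (Finset.univ.filter (fun x => pos x < pos w)) : ℤ)) ∧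
        (∑ w ∈ A, G.eCt w (Finset.univ.filter (fun x => pos x < pos w))) = G.touch A := by
  suffices H : ∀ (n : ℕ) (A : Finset G.V), A.card = n → q ∉ A →
      ∃ pos : G.V → ℕ,
        (∀ x, pos x = 0 ↔ x ∉ A) ∧
        (Set.InjOn pos A) ∧
        (∀ w ∈ A, c' w + 1 ≤ (G.eCt w (Finset.univ.filter (fun x => pos x < pos w)) : ℤ)) ∧
        (∑ w ∈ A, G.eCt w (Finset.univ.filter (fun x => pos x < pos w))) = G.touch A by
    intro A hA
    exact H A.card A rfl hA
  intro n
  induction n using Nat.strong_induction_on with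
  | _ n ih =>
    intro A hcard hqA
    rcases A.eq_empty_or_nonempty with rfl | hne
    · refine ⟨fun _ => 0, by simp, ?_, by simp, by simp [touch_empty]⟩
      intro x hx
      simp at hx
    · obtain ⟨w, hwA, hwb⟩ := HSS A hne hqA
      set A' := A.erase w with hA'
      have hqA' : q ∉ A' := fun h => hqA (Finset.mem_of_mem_erase h)
      have hcard' : A'.card < n := by
        rw [← hcard, hA']
        exact Finset.card_erase_lt_of_mem hwA
      obtain ⟨pos', h0, hinj, hbd, hsum⟩ := ih A'.card hcard' A' rfl hqA'
      set pos : G.V → ℕ :=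
        fun x => if x = w then 1 else (if pos' x = 0 then 0 else pos' x + 1) with hpos
      have hposw : pos w = 1 := by simp [hpos]
      have hmemA' : ∀ x, x ≠ w → (x ∈ A ↔ x ∈ A') := by
        intro x hx
        rw [hA', Finset.mem_erase]
        exact ⟨fun h => ⟨hx, h⟩, fun h => h.2⟩
      have hpos0 : ∀ x, pos x = 0 ↔ x ∉ A := by
        intro x
        by_cases hx : x = w
        · subst hx
          rw [hposw]
          simp [hwA]
        · simp only [hpos, if_neg hx]
          by_cases h0x : pos' x = 0
          · rw [if_pos h0x]
            have : x ∉ A' := (h0 x).mp h0x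
            simp only [eq_self_iff_true, true_iff]
            rw [hmemA' x hx]
            exact this
          · rw [if_neg h0x]
            have hxA' : x ∈ A' := by
              by_contra hc
              exact h0x ((h0 x).mpr hc)
            have hxA : x ∈ A := Finset.mem_of_mem_erase hxA'
            simp [hxA]
      have hposA' : ∀ u, u ∈ A' → pos u = pos' u + 1 := by
        intro u hu
        have h1 : u ≠ w := (Finset.mem_erase.mp hu).1
        have h2 : pos' u ≠ 0 := by
          intro hc
          exact ((h0 u).mp hc) hu
        simp [hpos, h1, h2]
      have hposw0 : pos' w = 0 := (h0 w).mpr (fun h => (Finset.mem_erase.mp h).1 rfl)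
      have hSeq : ∀ u ∈ A', (Finset.univ.filter (fun x => pos x < pos u))
          = (Finset.univ.filter (fun x => pos' x < pos' u)) := by
        intro u hu
        have hu1 : pos u = pos' u + 1 := hposA' u hu
        have hu0 : pos' u ≠ 0 := by
          intro hc
          exact ((h0 u).mp hc) hu
        ext x
        simp only [Finset.mem_filter, Finset.mem_univ, true_and]
        by_cases hx : x = w
        · rw [hx, hposw, hu1, hposw0]
          omega
        · have hpx : pos x = if pos' x = 0 then 0 else pos' x + 1 := by
            simp [hpos, hx]
          rw [hpx, hu1]
          by_cases h0x : pos' x = 0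
          · rw [if_pos h0x]
            omega
          · rw [if_neg h0x]
            omega
      have hSw : (Finset.univ.filter (fun x => pos x < pos w)) = Aᶜ := by
        ext x
        simp only [Finset.mem_filter, Finset.mem_univ, true_and, Finset.mem_compl, hposw,
          Nat.lt_one_iff]
        exact hpos0 x
      refine ⟨pos, hpos0, ?_, ?_, ?_⟩
      · intro x hx y hy hxy
        rw [Finset.mem_coe] at hx hy
        by_cases hxw : x = w <;> by_cases hyw : y = w
        · rw [hxw, hyw]
        · exfalso
          have hy' : y ∈ A' := (hmemA' y hyw).mp hy
          rw [hxw, hposw, hposA' y hy'] at hxy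
          have : pos' y ≠ 0 := by
            intro hc
            exact ((h0 y).mp hc) hy'
          omega
        · exfalso
          have hx' : x ∈ A' := (hmemA' x hxw).mp hx
          rw [hyw, hposw, hposA' x hx'] at hxy
          have : pos' x ≠ 0 := by
            intro hc
            exact ((h0 x).mp hc) hx'
          omega
        · have hx' : x ∈ A' := (hmemA' x hxw).mp hx
          have hy' : y ∈ A' := (hmemA' y hyw).mp hy
          rw [hposA' x hx', hposA' y hy'] at hxy
          exact hinj (Finset.mem_coe.mpr hx') (Finset.mem_coe.mpr hy') (by omega)
      · intro u hu
        by_cases huw : u = w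
        · subst huw
          rw [hSw]
          exact hwb
        · have hu' : u ∈ A' := (hmemA' u huw).mp hu
          rw [hSeq u hu']
          exact hbd u hu'
      · rw [← Finset.add_sum_erase A _ hwA, hSw, ← hA']
        rw [Finset.sum_congr rfl (fun u hu => by rw [hSeq u hu]), hsum, G.touch_erase hwA,
          ← hA']
        omega

end Multigraph
namespace Multigraph

open Finset
open scoped Classical

variable (G : Multigraph)

noncomputable def ball (q : G.V) : ℕ → Finset G.V
  | 0 => {q}
  | k+1 => ball q k ∪ Finset.univ.filter (fun w => 0 < G.eCt w (ball q k))

lemma ball_succ (q : G.V) (k : ℕ) :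
    G.ball q (k+1) = G.ball q k ∪ Finset.univ.filter (fun w => 0 < G.eCt w (G.ball q k)) := rfl

lemma ball_mono (q : G.V) : Monotone (G.ball q) := by
  apply monotone_nat_of_le_succ
  intro k
  rw [ball_succ]
  exact Finset.subset_union_left

lemma q_mem_ball (q : G.V) (k : ℕ) : q ∈ G.ball q k := by
  induction k with
  | zero => exact Finset.mem_singleton_self q
  | succ k ih => exact (G.ball_mono q (Nat.le_succ k)) ih

lemma ball_univ (hG : G.Connected) (q : G.V) :
    G.ball q (Fintype.card G.V) = Finset.univ := by
  have grow : ∀ k, G.ball q k ≠ Finset.univ → (G.ball q k).card < (G.ball q (k+1)).card := by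
    intro k hk
    apply Finset.card_lt_card
    rw [Finset.ssubset_iff_subset_ne]
    refine ⟨G.ball_mono q (Nat.le_succ k), ?_⟩
    obtain ⟨u, hu, v, hv, huv⟩ := G.cross_edge hG ⟨q, G.q_mem_ball q k⟩ hk
    intro heq
    have hv2 : v ∈ G.ball q (k+1) := by
      rw [ball_succ]
      apply Finset.mem_union_right
      apply Finset.mem_filter.mpr ⟨Finset.mem_univ v, ?_⟩
      calc 0 < G.mEd v u := by rw [G.mEd_symm v u]; omega
        _ ≤ G.eCt v (G.ball q k) := G.mEd_le_eCt hu
    rw [← heq] at hv2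
    exact (Finset.mem_compl.mp hv) hv2
  have claim : ∀ k, G.ball q k = Finset.univ ∨ k + 1 ≤ (G.ball q k).card := by
    intro k
    induction k with
    | zero =>
      right
      simp [ball]
    | succ k ih =>
      by_cases hk : G.ball q k = Finset.univ
      · left
        apply Finset.univ_subset_iff.mp
        rw [← hk]
        exact G.ball_mono q (Nat.le_succ k)
      · rcases ih with h | h
        · exact absurd h hk
        · right
          have := grow k hk
          omega
  rcases claim (Fintype.card G.V) with h | h
  · exact h
  · have : (G.ball q (Fintype.card G.V)).card ≤ Fintype.card G.V := by
      rw [← Finset.card_univ]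
      exact Finset.card_le_card (Finset.subset_univ _)
    omega

end Multigraph
namespace Multigraph

open Finset
open scoped Classical

variable (G : Multigraph)

lemma geom_bound (Vm : ℤ) (hVm : 0 ≤ Vm) :
    ∀ t : ℕ, Vm * (∑ j ∈ Finset.range t, (Vm + 1) ^ (j + 1)) + 1 ≤ (Vm + 1) ^ (t + 1) := by
  intro t
  induction t with
  | zero => simp; linarith
  | succ t ih =>
    rw [Finset.sum_range_succ, mul_add]
    have hpow : (Vm + 1) ^ (t + 1 + 1) = (Vm + 1) ^ (t + 1) + Vm * (Vm + 1) ^ (t + 1) := by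
      ring
    rw [hpow]
    linarith

lemma benevolence (hG : G.Connected) (c : G.V → ℤ) (q : G.V) :
    ∃ f0 : G.V → ℤ, ∀ w, w ≠ q → G.laplacian f0 w ≤ c w := by
  classical
  set N : ℕ := Fintype.card G.V with hN
  set Vm : ℤ := (Fintype.card G.E : ℤ) with hVm
  have hVm0 : (0:ℤ) ≤ Vm := Nat.cast_nonneg _
  set C0 : ℤ := 1 + ∑ w, max (-(c w)) 0 with hC0
  have hsum0 : (0:ℤ) ≤ ∑ w, max (-(c w)) 0 :=
    Finset.sum_nonneg (fun w _ => le_max_right _ _)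
  have hC01 : (1:ℤ) ≤ C0 := by rw [hC0]; linarith
  have hC0c : ∀ w, -(c w) ≤ C0 - 1 := by
    intro w
    have h1 : -(c w) ≤ max (-(c w)) 0 := le_max_left _ _
    have h2 : max (-(c w)) 0 ≤ ∑ v, max (-(c v)) 0 :=
      Finset.single_le_sum (f := fun v => max (-(c v)) 0)
        (fun v _ => le_max_right _ _) (Finset.mem_univ w)
    rw [hC0]
    linarith
  set M : ℕ → ℤ := fun k => C0 * (Vm + 1) ^ (N - k) with hM
  have hpow_pos : ∀ j : ℕ, (0:ℤ) < (Vm + 1) ^ j := fun j => pow_pos (by linarith) j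
  have hMpos : ∀ k, 0 < M k := by
    intro k
    rw [hM]
    exact mul_pos (by linarith) (hpow_pos _)
  set f0 : G.V → ℤ :=
    fun v => ∑ k ∈ Finset.range N, M k * (if v ∈ G.ball q k then 1 else 0) with hf0
  refine ⟨f0, ?_⟩
  intro w hw
  have hex : ∃ k, w ∈ G.ball q k :=
    ⟨N, by rw [hN, G.ball_univ hG q]; exact Finset.mem_univ w⟩
  have hk0w : w ∈ G.ball q (Nat.find hex) := Nat.find_spec hex
  have hk0min : ∀ j, j < Nat.find hex → w ∉ G.ball q j := fun j hj => Nat.find_min hex hj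
  have hk0pos : Nat.find hex ≠ 0 := by
    intro h
    rw [h] at hk0w
    exact hw (Finset.mem_singleton.mp hk0w)
  obtain ⟨m, hm⟩ : ∃ m, Nat.find hex = m + 1 := ⟨Nat.find hex - 1, by omega⟩
  have hk0N : m + 1 ≤ N := by
    rw [← hm]
    exact Nat.find_le (by rw [hN, G.ball_univ hG q]; exact Finset.mem_univ w)
  have hwm : w ∉ G.ball q m := hk0min m (by omega)
  have hwm1 : 0 < G.eCt w (G.ball q m) := by
    rw [hm, ball_succ] at hk0w
    rcases Finset.mem_union.mp hk0w with h | h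
    · exact absurd h hwm
    · exact (Finset.mem_filter.mp h).2
  have hwk : ∀ k, m + 1 ≤ k → w ∈ G.ball q k := by
    intro k hk
    exact (G.ball_mono q hk) (hm ▸ hk0w)
  -- laplacian of f0
  have hlap : G.laplacian f0 w
      = ∑ k ∈ Finset.range N, M k * G.laplacian (G.ind (G.ball q k)) w := by
    have h1 := G.lap_sum (Finset.range N)
      (fun k v => M k * G.ind (G.ball q k) v) w
    have h2 : G.laplacian f0 w
        = G.laplacian (fun v => ∑ k ∈ Finset.range N, M k * G.ind (G.ball q k) v) w := by
      rfl
    rw [h2, h1]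
    apply Finset.sum_congr rfl
    intro k _
    exact G.lap_smul (M k) (G.ind (G.ball q k)) w
  -- split the sum
  have hsplit : ∑ k ∈ Finset.range N, M k * G.laplacian (G.ind (G.ball q k)) w
      = (∑ k ∈ Finset.range (m+1), M k * G.laplacian (G.ind (G.ball q k)) w)
        + ∑ k ∈ Finset.Ico (m+1) N, M k * G.laplacian (G.ind (G.ball q k)) w := by
    rw [Finset.range_eq_Ico, ← Finset.sum_Ico_consecutive _ (Nat.zero_le (m+1)) hk0N,
      ← Finset.range_eq_Ico]
  -- first part
  have hfirst : ∑ k ∈ Finset.range (m+1), M k * G.laplacian (G.ind (G.ball q k)) w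
      ≤ -(M m) := by
    have hb : ∀ k ∈ Finset.range (m+1),
        M k * G.laplacian (G.ind (G.ball q k)) w ≤ (if k = m then -(M m) else 0) := by
      intro k hk
      rw [Finset.mem_range] at hk
      have hwk' : w ∉ G.ball q k := by
        by_cases hkm : k = m
        · rw [hkm]; exact hwm
        · exact hk0min k (by omega)
      rw [G.lap_ind _ w, if_neg hwk']
      by_cases hkm : k = m
      · rw [if_pos hkm, hkm]
        have h1 : (1:ℤ) ≤ (G.eCt w (G.ball q m) : ℤ) := by exact_mod_cast hwm1
        nlinarith [hMpos m]
      · rw [if_neg hkm]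
        have h1 : (0:ℤ) ≤ (G.eCt w (G.ball q k) : ℤ) := Nat.cast_nonneg _
        nlinarith [hMpos k]
    calc ∑ k ∈ Finset.range (m+1), M k * G.laplacian (G.ind (G.ball q k)) w
        ≤ ∑ k ∈ Finset.range (m+1), (if k = m then -(M m) else 0) := Finset.sum_le_sum hb
      _ = -(M m) := by
          rw [Finset.sum_ite_eq' (Finset.range (m+1)) m (fun _ => -(M m))]
          simp
  -- second part
  have hsecond : ∑ k ∈ Finset.Ico (m+1) N, M k * G.laplacian (G.ind (G.ball q k)) w
      ≤ ∑ k ∈ Finset.Ico (m+1) N, M k * Vm := by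
    apply Finset.sum_le_sum
    intro k hk
    rw [Finset.mem_Ico] at hk
    have hwk' : w ∈ G.ball q k := hwk k hk.1
    rw [G.lap_ind _ w, if_pos hwk']
    have h1 : (G.eCt w (G.ball q k)ᶜ : ℤ) ≤ Vm := by
      rw [hVm]
      exact_mod_cast G.eCt_le_card w _
    nlinarith [hMpos k, (hMpos k).le]
  -- geometric bound
  have hgeom : ∑ k ∈ Finset.Ico (m+1) N, M k * Vm ≤ M m - C0 := by
    have hre : ∑ k ∈ Finset.Ico (m+1) N, (Vm + 1) ^ (N - k)
        = ∑ j ∈ Finset.range (N - (m+1)), (Vm + 1) ^ (j + 1) := by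
      rw [Finset.sum_Ico_eq_sum_range]
      rw [← Finset.sum_range_reflect]
      apply Finset.sum_congr rfl
      intro j hj
      rw [Finset.mem_range] at hj
      congr 1
      omega
    have hre2 : ∑ k ∈ Finset.Ico (m+1) N, M k * Vm
        = C0 * (Vm * ∑ k ∈ Finset.Ico (m+1) N, (Vm + 1) ^ (N - k)) := by
      rw [Finset.mul_sum, Finset.mul_sum]
      apply Finset.sum_congr rfl
      intro k _
      rw [hM]
      ring
    have hgb := geom_bound Vm hVm0 (N - (m+1))
    rw [hre] at hre2
    have hexp : (N - (m+1)) + 1 = N - m := by omega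
    rw [hexp] at hgb
    have hMm : M m = C0 * (Vm + 1) ^ (N - m) := by rw [hM]
    rw [hre2, hMm]
    nlinarith [hC01, hgb]
  have hfinal : -(C0) ≤ c w := by
    have := hC0c w
    linarith
  rw [hlap, hsplit]
  linarith

end Multigraph

namespace Multigraph

open Finset
open scoped Classical

variable (G : Multigraph)

lemma master (hG : G.Connected) (c : G.V → ℤ) (q : G.V)
    (f0 : G.V → ℤ) (hf0 : ∀ w, w ≠ q → G.laplacian f0 w ≤ c w) :
    ∃ (f : G.V → ℤ) (pos : G.V → ℕ),
      (∀ w, w ≠ q → 0 ≤ c w - G.laplacian f w) ∧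
      ((∑ w ∈ Finset.univ.erase q, (c w - G.laplacian f w)) ≤ G.genus) ∧
      (∀ x, pos x = 0 ↔ x = q) ∧
      (∀ x y, pos x = pos y → x = y) ∧
      (∀ w, w ≠ q → c w - G.laplacian f w + 1
          ≤ (G.eCt w (Finset.univ.filter (fun x => pos x < pos w)) : ℤ)) ∧
      ((∑ w ∈ Finset.univ.erase q,
          (G.eCt w (Finset.univ.filter (fun x => pos x < pos w)) : ℤ))
        = (Fintype.card G.E : ℤ)) := by
  classical
  have hN1 : 1 ≤ Fintype.card G.V := Fintype.card_pos_iff.mpr hG.1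
  obtain ⟨f, hfval, hfss⟩ := G.exists_superstable hG c q f0 hf0
  have hqer : q ∉ Finset.univ.erase q := fun h => (Finset.mem_erase.mp h).1 rfl
  obtain ⟨pos, hpos0, hposinj, hposbd, hpossum⟩ :=
    G.exists_pos q (fun w => c w - G.laplacian f w)
      (fun B hB hqB => hfss B hB hqB) (Finset.univ.erase q) hqer
  have hmem : ∀ x, x ∈ Finset.univ.erase q ↔ x ≠ q := by
    intro x
    rw [Finset.mem_erase]
    exact ⟨fun h => h.1, fun h => ⟨h, Finset.mem_univ x⟩⟩
  have hpos0' : ∀ x, pos x = 0 ↔ x = q := by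
    intro x
    rw [hpos0 x, hmem x]
    tauto
  have hinj : ∀ x y, pos x = pos y → x = y := by
    intro x y hxy
    by_cases hx : x = q <;> by_cases hy : y = q
    · rw [hx, hy]
    · exfalso
      have h1 : pos x = 0 := (hpos0' x).mpr hx
      have h2 : pos y ≠ 0 := fun hc => hy ((hpos0' y).mp hc)
      omega
    · exfalso
      have h1 : pos y = 0 := (hpos0' y).mpr hy
      have h2 : pos x ≠ 0 := fun hc => hx ((hpos0' x).mp hc)
      omega
    · exact hposinj (Finset.mem_coe.mpr ((hmem x).mpr hx))
        (Finset.mem_coe.mpr ((hmem y).mpr hy)) hxy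
  have hbd : ∀ w, w ≠ q → c w - G.laplacian f w + 1
      ≤ (G.eCt w (Finset.univ.filter (fun x => pos x < pos w)) : ℤ) := by
    intro w hw
    exact hposbd w ((hmem w).mpr hw)
  have hsumE : (∑ w ∈ Finset.univ.erase q,
      (G.eCt w (Finset.univ.filter (fun x => pos x < pos w)) : ℤ))
      = (Fintype.card G.E : ℤ) := by
    rw [← Nat.cast_sum]
    rw [hpossum, G.touch_erase_univ q]
  refine ⟨f, pos, fun w hw => by linarith [hfval w hw], ?_, hpos0', hinj, hbd, hsumE⟩
  -- the genus bound
  have hsum1 : ∑ w ∈ Finset.univ.erase q, ((c w - G.laplacian f w) + 1)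
      ≤ (Fintype.card G.E : ℤ) := by
    rw [← hsumE]
    apply Finset.sum_le_sum
    intro w hw
    exact hposbd w hw
  rw [Finset.sum_add_distrib, Finset.sum_const] at hsum1
  have hcard : (Finset.univ.erase q).card = Fintype.card G.V - 1 := by
    rw [Finset.card_erase_of_mem (Finset.mem_univ q), Finset.card_univ]
  rw [hcard] at hsum1
  have hcast : ((Fintype.card G.V - 1 : ℕ) : ℤ) = (Fintype.card G.V : ℤ) - 1 := by
    omega
  simp only [nsmul_eq_mul, mul_one] at hsum1
  rw [hcast] at hsum1
  unfold genus
  linarith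

end Multigraph
namespace Multigraph

open Finset
open scoped Classical

variable (G : Multigraph)

lemma solve_q (hG : G.Connected) (h2 : G.genus ≤ 2) (D : G.Divisor)
    (hDeff : G.Effective D) (hDdeg : G.degree D = 2) (q : G.V) :
    (∃ E' : G.Divisor, G.Effective E' ∧
        G.LinEquiv (D - fun v => if v = q then 1 else 0) E') ∨
    (G.genus = 2 ∧ ∃ (f : G.V → ℤ) (pos : G.V → ℕ),
      (∀ x, pos x = 0 ↔ x = q) ∧ (∀ x y, pos x = pos y → x = y) ∧
      (∀ w, D w - (if w = q then 1 else 0) - G.laplacian f w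
          = (G.eCt w (Finset.univ.filter (fun x => pos x < pos w)) : ℤ) - 1)) := by
  classical
  have hN1 : 1 ≤ Fintype.card G.V := Fintype.card_pos_iff.mpr hG.1
  set c : G.V → ℤ := fun w => D w - (if w = q then 1 else 0) with hc
  have hf0 : ∀ w, w ≠ q → G.laplacian (fun _ => (0:ℤ)) w ≤ c w := by
    intro w hw
    rw [G.lap_zero w, hc]
    simp only [if_neg hw, sub_zero]
    exact hDeff w
  obtain ⟨f, pos, hvalid, hgen, hpos0, hinj, hbd, hsumE⟩ := G.master hG c q _ hf0
  set E' : G.Divisor := fun w => c w - G.laplacian f w with hE'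
  have hmem : ∀ x, x ∈ Finset.univ.erase q ↔ x ≠ q := by
    intro x
    rw [Finset.mem_erase]
    exact ⟨fun h => h.1, fun h => ⟨h, Finset.mem_univ x⟩⟩
  have hsumc : ∑ v, c v = 1 := by
    rw [hc, Finset.sum_sub_distrib]
    have h1 : ∑ v, D v = 2 := hDdeg
    have h2' : ∑ v, (if v = q then (1:ℤ) else 0) = 1 := by
      rw [Finset.sum_ite_eq' Finset.univ q (fun _ => (1:ℤ))]
      simp
    rw [h1, h2']
    norm_num
  have hsumE' : ∑ v, E' v = 1 := by
    rw [hE', Finset.sum_sub_distrib, G.sum_lap_univ f, hsumc]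
    ring
  have hsplitq : E' q + ∑ v ∈ Finset.univ.erase q, E' v = 1 := by
    rw [Finset.add_sum_erase _ E' (Finset.mem_univ q)]
    exact hsumE'
  by_cases h0 : 0 ≤ E' q
  · left
    refine ⟨E', ?_, ⟨f, ?_⟩⟩
    · intro w
      by_cases hw : w = q
      · rw [hw]; exact h0
      · exact hvalid w hw
    · funext w
      simp only [Pi.sub_apply, hE', hc]
      ring
  · right
    push_neg at h0
    have hEq1 : E' q ≤ -1 := by omega
    have hsum2 : 2 ≤ ∑ v ∈ Finset.univ.erase q, E' v := by linarith
    have hsumle : ∑ v ∈ Finset.univ.erase q, E' v ≤ G.genus := hgen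
    have hgen2 : G.genus = 2 := le_antisymm h2 (le_trans hsum2 hsumle)
    have hsumeq : ∑ v ∈ Finset.univ.erase q, E' v = 2 := le_antisymm (hgen2 ▸ hsumle) hsum2
    have hEqm1 : E' q = -1 := by linarith
    -- card E = card V + 1
    have hcardE : (Fintype.card G.E : ℤ) = (Fintype.card G.V : ℤ) + 1 := by
      have := hgen2
      unfold genus at this
      linarith
    -- pointwise equality
    have hple : ∀ w ∈ Finset.univ.erase q,
        E' w + 1 ≤ (G.eCt w (Finset.univ.filter (fun x => pos x < pos w)) : ℤ) := by
      intro w hw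
      exact hbd w ((hmem w).mp hw)
    have hsums : ∑ w ∈ Finset.univ.erase q, (E' w + 1)
        = ∑ w ∈ Finset.univ.erase q,
          (G.eCt w (Finset.univ.filter (fun x => pos x < pos w)) : ℤ) := by
      rw [hsumE]
      rw [Finset.sum_add_distrib, Finset.sum_const, hsumeq]
      have hcard : (Finset.univ.erase q).card = Fintype.card G.V - 1 := by
        rw [Finset.card_erase_of_mem (Finset.mem_univ q), Finset.card_univ]
      rw [hcard]
      have : ((Fintype.card G.V - 1 : ℕ) : ℤ) = (Fintype.card G.V : ℤ) - 1 := by omega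
      simp only [nsmul_eq_mul, mul_one]
      rw [this, hcardE]
      ring
    have hpt : ∀ w ∈ Finset.univ.erase q,
        E' w + 1 = (G.eCt w (Finset.univ.filter (fun x => pos x < pos w)) : ℤ) :=
      (Finset.sum_eq_sum_iff_of_le hple).mp hsums
    refine ⟨hgen2, f, pos, hpos0, hinj, ?_⟩
    intro w
    by_cases hw : w = q
    · subst hw
      have hfq : Finset.univ.filter (fun x => pos x < pos w) = ∅ := by
        apply Finset.filter_false_of_mem
        intro x _
        rw [(hpos0 w).mpr rfl]
        omega
      rw [hfq]
      have : G.eCt w (∅ : Finset G.V) = 0 := Finset.sum_empty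
      rw [this]
      have h5 := hEqm1
      simp only [hE', hc] at h5
      norm_num at h5 ⊢
      push_cast
      linarith
    · have h5 := hpt w ((hmem w).mpr hw)
      simp only [hE', hc] at h5
      linarith

end Multigraph
namespace Multigraph

open Finset
open scoped Classical

variable (G : Multigraph)

lemma eff_deg_one (F : G.Divisor) (hF : G.Effective F) (h1 : G.degree F = 1) :
    ∃ q, F = fun v => if v = q then 1 else 0 := by
  classical
  have hex : ∃ q, 1 ≤ F q := by
    by_contra hc
    push_neg at hc
    have hle : ∀ v, F v ≤ 0 := fun v => by have := hc v; omega
    have : G.degree F ≤ 0 := Finset.sum_nonpos (fun v _ => hle v)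
    omega
  obtain ⟨q, hq⟩ := hex
  have hsum : F q + ∑ v ∈ Finset.univ.erase q, F v = 1 := by
    rw [Finset.add_sum_erase _ F (Finset.mem_univ q)]
    exact h1
  have hnn : 0 ≤ ∑ v ∈ Finset.univ.erase q, F v :=
    Finset.sum_nonneg (fun v _ => hF v)
  have hFq : F q = 1 := by linarith
  have hzero : ∀ v ∈ Finset.univ.erase q, F v = 0 := by
    have hs0 : ∑ v ∈ Finset.univ.erase q, F v = 0 := by linarith
    exact (Finset.sum_eq_zero_iff_of_nonneg (fun v _ => hF v)).mp hs0
  refine ⟨q, ?_⟩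
  funext v
  by_cases hvq : v = q
  · rw [hvq, if_pos rfl]; exact hFq
  · rw [if_neg hvq]
    exact hzero v (Finset.mem_erase.mpr ⟨hvq, Finset.mem_univ v⟩)

lemma main_key (hG : G.Connected) (h2 : G.genus ≤ 2) :
    ∃ D : G.Divisor, G.Effective D ∧ G.degree D = 2 ∧
      ∀ q : G.V, ∃ E' : G.Divisor, G.Effective E' ∧
        G.LinEquiv (D - fun v => if v = q then 1 else 0) E' := by
  classical
  have hne : Nonempty G.V := hG.1
  have hN1 : 1 ≤ Fintype.card G.V := Fintype.card_pos_iff.mpr hne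
  by_cases hg2 : G.genus = 2
  · -- genus exactly 2 : use the canonical divisor, made effective
    set K : G.V → ℤ := fun v => (G.valence v : ℤ) - 2 with hK
    have hcardE : (Fintype.card G.E : ℤ) = (Fintype.card G.V : ℤ) + 1 := by
      have := hg2
      unfold genus at this
      linarith
    have hdegK : ∑ v, K v = 2 := by
      have hh : (∑ v, (G.valence v : ℤ)) = 2 * (Fintype.card G.E : ℤ) := by
        exact_mod_cast G.handshake
      rw [hK]
      rw [Finset.sum_sub_distrib, hh, Finset.sum_const, Finset.card_univ, hcardE]
      push_cast
      ring
    obtain ⟨q0⟩ := hne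
    obtain ⟨fb, hfb⟩ := G.benevolence hG K q0
    obtain ⟨fK, posK, hKval, hKgen, -, -, -, -⟩ := G.master hG K q0 fb hfb
    set D : G.Divisor := fun w => K w - G.laplacian fK w with hD
    have hsD : ∑ v, D v = 2 := by
      rw [hD, Finset.sum_sub_distrib, G.sum_lap_univ fK, hdegK]
      ring
    have hDeff : G.Effective D := by
      intro w
      by_cases hw : w = q0
      · have hsp : D q0 + ∑ v ∈ Finset.univ.erase q0, D v = 2 := by
          rw [Finset.add_sum_erase _ D (Finset.mem_univ q0)]
          exact hsD
        have hbnd : ∑ v ∈ Finset.univ.erase q0, D v ≤ 2 := by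
          calc ∑ v ∈ Finset.univ.erase q0, D v
              = ∑ v ∈ Finset.univ.erase q0, (K v - G.laplacian fK v) := rfl
            _ ≤ G.genus := hKgen
            _ = 2 := hg2
        rw [hw]
        linarith
      · exact hKval w hw
    have hDdeg : G.degree D = 2 := hsD
    refine ⟨D, hDeff, hDdeg, ?_⟩
    intro q
    rcases G.solve_q hG h2 D hDeff hDdeg q with h | ⟨-, f, pos, hpos0, hinj, hEid⟩
    · exact h
    · -- derive a contradiction
      exfalso
      set h : G.V → ℤ := fun v => fK v + f v with hh
      have hlaph : ∀ w, G.laplacian h w = G.laplacian fK w + G.laplacian f w := by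
        intro w
        rw [hh]
        exact G.lap_add fK f w
      -- decomposition of valence
      have hdecomp : ∀ w, (G.valence w : ℤ)
          = (G.eCt w (Finset.univ.filter (fun x => pos x < pos w)) : ℤ)
            + (G.eCt w (Finset.univ.filter (fun x => pos w < pos x)) : ℤ) := by
        intro w
        rw [G.valence_eq w]
        have hun : Finset.univ.erase w
            = (Finset.univ.filter (fun x => pos x < pos w))
              ∪ (Finset.univ.filter (fun x => pos w < pos x)) := by
          ext x
          simp only [Finset.mem_erase, Finset.mem_union, Finset.mem_filter, Finset.mem_univ,
            true_and]
          constructor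
          · rintro ⟨hxw, -⟩
            have : pos x ≠ pos w := fun hc => hxw (hinj x w hc)
            omega
          · rintro (h | h) <;>
              exact ⟨fun hc => by rw [hc] at h; omega, trivial⟩
        have hdisj : Disjoint (Finset.univ.filter (fun x => pos x < pos w))
            (Finset.univ.filter (fun x => pos w < pos x)) := by
          apply Finset.disjoint_left.mpr
          intro x hx1 hx2
          rw [Finset.mem_filter] at hx1 hx2
          omega
        rw [hun, G.eCt_union hdisj]
        push_cast
        ring
      -- the uniform formula for the laplacian of h
      have hlhw : ∀ w, G.laplacian h w
          = (G.eCt w (Finset.univ.filter (fun x => pos w < pos x)) : ℤ) - 1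
            - (if w = q then 1 else 0) := by
        intro w
        have h1 := hEid w
        have h2' : D w = K w - G.laplacian fK w := rfl
        rw [h2'] at h1
        have h3 : K w = (G.valence w : ℤ) - 2 := rfl
        rw [hlaph w]
        have h4 := hdecomp w
        -- h1 : K w - lap fK w - ite - lap f w = eCt early - 1
        linarith [h1, h4, h3.symm.le]
      -- maximum of h
      have huniv_ne : (Finset.univ : Finset G.V).Nonempty := ⟨q0, Finset.mem_univ q0⟩
      set M : ℤ := Finset.max' (Finset.univ.image h) (huniv_ne.image h) with hM
      have hMub : ∀ x, h x ≤ M := fun x =>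
        Finset.le_max' _ _ (Finset.mem_image_of_mem h (Finset.mem_univ x))
      have hMmem : ∃ x, h x = M := by
        have hmem := Finset.max'_mem (Finset.univ.image h) (huniv_ne.image h)
        rw [Finset.mem_image] at hmem
        obtain ⟨x, -, hx⟩ := hmem
        exact ⟨x, hx⟩
      set Astar : Finset G.V := Finset.univ.filter (fun x => h x = M) with hAstar
      have hAne : Astar.Nonempty := by
        obtain ⟨x, hx⟩ := hMmem
        exact ⟨x, Finset.mem_filter.mpr ⟨Finset.mem_univ x, hx⟩⟩
      obtain ⟨ws, hws, hwsmax⟩ := Finset.exists_max_image Astar pos hAne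
      have hwsM : h ws = M := (Finset.mem_filter.mp hws).2
      set Z : Finset G.V := Finset.univ.filter (fun x => ¬ h x = M) with hZ
      have hlow : (G.eCt ws Z : ℤ) ≤ G.laplacian h ws := by
        rw [G.laplacian_apply h ws]
        have hterm : ∀ x ∈ (Finset.univ : Finset G.V),
            (if ¬ h x = M then (G.mEd ws x : ℤ) else 0)
              ≤ (G.mEd ws x : ℤ) * (h ws - h x) := by
          intro x _
          by_cases hx : h x = M
          · rw [if_neg (not_not_intro hx), hwsM, hx]
            simp
          · rw [if_pos hx]
            have hx1 : h x ≤ M - 1 := by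
              have := hMub x
              have : h x ≠ M := hx
              omega
            have hge : (1:ℤ) ≤ h ws - h x := by
              rw [hwsM]; linarith
            nlinarith [(Nat.cast_nonneg (G.mEd ws x) : (0:ℤ) ≤ (G.mEd ws x : ℤ))]
        calc (G.eCt ws Z : ℤ) = ∑ x ∈ Z, (G.mEd ws x : ℤ) := by
              rw [eCt]; push_cast; rfl
          _ = ∑ x ∈ (Finset.univ : Finset G.V),
              (if ¬ h x = M then (G.mEd ws x : ℤ) else 0) := by
              rw [hZ, Finset.sum_filter]
          _ ≤ _ := Finset.sum_le_sum hterm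
      have hsubZ : (Finset.univ.filter (fun x => pos ws < pos x)) ⊆ Z := by
        intro x hx
        rw [Finset.mem_filter] at hx
        rw [hZ, Finset.mem_filter]
        refine ⟨Finset.mem_univ x, ?_⟩
        intro hxM
        have hxA : x ∈ Astar := Finset.mem_filter.mpr ⟨Finset.mem_univ x, hxM⟩
        have := hwsmax x hxA
        omega
      have hmono : (G.eCt ws (Finset.univ.filter (fun x => pos ws < pos x)) : ℤ)
          ≤ (G.eCt ws Z : ℤ) := by
        exact_mod_cast G.eCt_mono ws hsubZ
      have hid := hlhw ws
      have hite : (0:ℤ) ≤ (if ws = q then 1 else 0) := by split <;> norm_num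
      linarith

  · -- genus ≤ 1
    obtain ⟨v0⟩ := hne
    set D : G.Divisor := fun v => if v = v0 then 2 else 0 with hD
    have hDeff : G.Effective D := by
      intro v
      simp only [hD]
      split <;> norm_num
    have hDdeg : G.degree D = 2 := by
      unfold degree
      rw [hD, Finset.sum_ite_eq' Finset.univ v0 (fun _ => (2:ℤ))]
      simp
    refine ⟨D, hDeff, hDdeg, ?_⟩
    intro q
    rcases G.solve_q hG h2 D hDeff hDdeg q with h | ⟨hgen2, -⟩
    · exact h
    · exact absurd hgen2 hg2

end Multigraph
/-- If `G` is a graph with genus `g(G) ≤ 2`, then `gon(G) ≤ 2`. -/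
theorem stmt_5 (G : Multigraph) (hG : G.Connected) (h : G.genus ≤ 2) :
    G.gonality ≤ 2 := by
  classical
  obtain ⟨D, hDeff, hDdeg, hkey⟩ := G.main_key hG h
  have hrank : 1 ≤ G.rank D := by
    have hmem : (1:ℤ) ∈ {r : ℤ | r = -1 ∨ (0 ≤ r ∧ G.RankGe D r)} := by
      right
      refine ⟨by norm_num, ?_⟩
      intro F hF hdegF
      obtain ⟨q, rfl⟩ := G.eff_deg_one F hF hdegF
      exact hkey q
    have hbdd : BddAbove {r : ℤ | r = -1 ∨ (0 ≤ r ∧ G.RankGe D r)} := by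
      refine ⟨2, ?_⟩
      intro r hr
      rcases hr with rfl | ⟨hr0, hRG⟩
      · norm_num
      · by_contra hc
        push_neg at hc
        obtain ⟨v0⟩ := hG.1
        have hFeff : G.Effective (fun v => if v = v0 then r else 0) := by
          intro v
          by_cases hv : v = v0 <;> simp [hv, hr0]
        have hFdeg : G.degree (fun v => if v = v0 then r else 0) = r := by
          unfold Multigraph.degree
          rw [Finset.sum_ite_eq' Finset.univ v0 (fun _ => r)]
          simp
        obtain ⟨E', hE'eff, hlin⟩ := hRG _ hFeff hFdeg
        have hdegeq := G.linEquiv_degree hlin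
        have hdegDF : G.degree (D - fun v => if v = v0 then r else 0) = 2 - r := by
          unfold Multigraph.degree
          simp only [Pi.sub_apply]
          rw [Finset.sum_sub_distrib]
          have h1 : ∑ v, D v = 2 := hDdeg
          have h2 : ∑ v, (if v = v0 then r else 0) = r := by
            rw [Finset.sum_ite_eq' Finset.univ v0 (fun _ => r)]
            simp
          rw [h1, h2]
        have hE'nn : 0 ≤ G.degree E' :=
          Finset.sum_nonneg (fun v _ => hE'eff v)
        rw [hdegDF] at hdegeq
        linarith
    exact le_csSup hbdd hmem
  apply Nat.sInf_le
  refine ⟨D, hDeff, ?_, hrank⟩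
  rw [hDdeg]
  norm_num
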